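/- Let T be a bounded operator on a Hilbert space with ‖T^n‖ ≤ e^{-εn} for all n, and let n_diss = min{n : ‖T^n‖ < 1/e}. If 1 is not in the spectrum of T, then ‖(I−T)^{-1}‖·(1 − e^{-1}) ≤ n_diss ≤ 1/ε + 1. -/

import Mathlib

/-- resolvent lower bound and `1/ε` upper bound for dissipation time. -/
theorem dissipation_time_resolvent_bounds
    {H : Type*} [NormedAddCommGroup H] [InnerProductSpace ℂ H] [CompleteSpace H]
    (T : H →L[ℂ] H) (ε : ℝ) (hε : 0 < ε)
    (hT : ∀ n : ℕ, 1 ≤ n → ‖T ^ n‖ ≤ Real.exp (-(ε * n)))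
    (hspec : (1 : ℂ) ∉ spectrum ℂ T) :
    ‖Ring.inverse ((1 : H →L[ℂ] H) - T)‖ * (1 - Real.exp (-1)) ≤
        ((sInf {n : ℕ | 0 < n ∧ ‖T ^ n‖ < Real.exp (-1)} : ℕ) : ℝ) ∧
      ((sInf {n : ℕ | 0 < n ∧ ‖T ^ n‖ < Real.exp (-1)} : ℕ) : ℝ) ≤ 1 / ε + 1 := by
  have hunit : IsUnit ((1 : H →L[ℂ] H) - T) := by
    have := spectrum.notMem_iff.mp hspec
    simpa using this
  set S : Set ℕ := {n : ℕ | 0 < n ∧ ‖T ^ n‖ < Real.exp (-1)} with hS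
  have h1ε : (0:ℝ) ≤ 1/ε := by positivity
  have hn0 : (⌊(1:ℝ)/ε⌋₊ + 1) ∈ S := by
    refine ⟨Nat.succ_pos _, ?_⟩
    have h1 : (1:ℝ)/ε < ((⌊(1:ℝ)/ε⌋₊ : ℝ) + 1) := Nat.lt_floor_add_one _
    have h2 : 1 < ε * ((⌊(1:ℝ)/ε⌋₊ : ℝ) + 1) := by
      rw [div_lt_iff₀ hε] at h1
      nlinarith
    have h3 := hT (⌊(1:ℝ)/ε⌋₊ + 1) (Nat.succ_le_succ (Nat.zero_le _))
    push_cast at h3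
    calc ‖T ^ (⌊(1:ℝ)/ε⌋₊ + 1)‖ ≤ Real.exp (-(ε * ((⌊(1:ℝ)/ε⌋₊ : ℝ) + 1))) := h3
      _ < Real.exp (-1) := Real.exp_lt_exp.mpr (by linarith)
  have hne : S.Nonempty := ⟨_, hn0⟩
  have hmem : sInf S ∈ S := Nat.sInf_mem hne
  set n := sInf S with hn
  obtain ⟨hnpos, hnlt⟩ := hmem
  have hpowle : ∀ k : ℕ, ‖T ^ k‖ ≤ 1 := by
    intro k
    cases k with
    | zero => rw [pow_zero]; exact ContinuousLinearMap.norm_id_le (𝕜 := ℂ) (E := H)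
    | succ m =>
      have h3 := hT (m + 1) (Nat.succ_le_succ (Nat.zero_le _))
      push_cast at h3
      calc ‖T ^ (m+1)‖ ≤ Real.exp (-(ε * ((m:ℝ)+1))) := h3
        _ ≤ 1 := by
            rw [Real.exp_le_one_iff]
            have hm : (0:ℝ) ≤ (m:ℝ) + 1 := by positivity
            nlinarith
  constructor
  · -- lower bound
    set R := Ring.inverse ((1 : H →L[ℂ] H) - T) with hR
    have hRmul : R * ((1 : H →L[ℂ] H) - T) = 1 := Ring.inverse_mul_cancel _ hunit
    have key : R = (∑ i ∈ Finset.range n, T ^ i) + R * T ^ n := by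
      have h1 : R * ((1 : H →L[ℂ] H) - T ^ n) = ∑ i ∈ Finset.range n, T ^ i := by
        rw [← mul_neg_geom_sum T n, ← mul_assoc, hRmul, one_mul]
      have h2 : R * ((1 : H →L[ℂ] H) - T ^ n) + R * T ^ n = R := by
        rw [mul_sub, mul_one]; abel
      rw [← h1]; exact h2.symm
    have hSum : ‖∑ i ∈ Finset.range n, T ^ i‖ ≤ (n : ℝ) := by
      calc ‖∑ i ∈ Finset.range n, T ^ i‖ ≤ ∑ i ∈ Finset.range n, ‖T ^ i‖ :=
            norm_sum_le _ _
        _ ≤ ∑ _i ∈ Finset.range n, (1:ℝ) := Finset.sum_le_sum fun i _ => hpowle i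
        _ = (n : ℝ) := by simp
    have hRn : ‖R‖ ≤ (n : ℝ) + ‖R‖ * ‖T ^ n‖ := by
      calc ‖R‖ = ‖(∑ i ∈ Finset.range n, T ^ i) + R * T ^ n‖ := by rw [← key]
        _ ≤ ‖∑ i ∈ Finset.range n, T ^ i‖ + ‖R * T ^ n‖ := norm_add_le _ _
        _ ≤ (n : ℝ) + ‖R‖ * ‖T ^ n‖ := by
            gcongr
            exact norm_mul_le _ _
    have hRpos : (0:ℝ) ≤ ‖R‖ := norm_nonneg _
    nlinarith [hnlt, hRpos, hRn]
  · -- upper bound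
    have hle : n ≤ ⌊(1:ℝ)/ε⌋₊ + 1 := Nat.sInf_le hn0
    calc (n : ℝ) ≤ ((⌊(1:ℝ)/ε⌋₊ + 1 : ℕ) : ℝ) := by exact_mod_cast hle
      _ ≤ 1/ε + 1 := by
          push_cast
          have := Nat.floor_le h1ε
          linarith
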